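/- Let ℓ be a natural number and W₁, W₂ ∈ ℂ^{ℓ×ℓ} be such that the ℓ×2ℓ block matrix [W₁ W₂] has full row rank ℓ and W₁W₂* + W₂W₁* is positive semidefinite. Then the range relation {(W₂*x, −W₁*x) : x ∈ ℂ^ℓ} is a maximally dissipative linear relation on ℂ^ℓ: it satisfies Re⟨W₂*x, −W₁*x⟩ ≤ 0 for all x ∈ ℂ^ℓ, and every dissipative linear relation on ℂ^ℓ containing it equals it. -/

import Mathlib

open Matrix
open scoped ComplexOrder

/-- The range relation `{(W₂* x, −W₁* x) : x ∈ ℂ^ℓ}` as a linear relation on `ℂ^ℓ`. -/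
noncomputable def ranRel {ℓ : ℕ} (W₁ W₂ : Matrix (Fin ℓ) (Fin ℓ) ℂ) :
    Submodule ℂ ((Fin ℓ → ℂ) × (Fin ℓ → ℂ)) :=
  LinearMap.range ((W₂ᴴ).mulVecLin.prod (-(W₁ᴴ).mulVecLin))

/-- A linear relation `T` on `ℂ^ℓ` is dissipative if `Re ⟨f, g⟩ ≤ 0` for all `(f, g) ∈ T`,
where `⟨f, g⟩ = ∑ i, conj (f i) * g i` is the standard Hermitian inner product. -/
def IsDissipativeRel {ℓ : ℕ} (T : Submodule ℂ ((Fin ℓ → ℂ) × (Fin ℓ → ℂ))) : Prop :=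
  ∀ p ∈ T, (star p.1 ⬝ᵥ p.2).re ≤ 0

/-- A linear relation is maximally dissipative if it is dissipative and every dissipative
linear relation containing it equals it. -/
def IsMaxDissipativeRel {ℓ : ℕ} (T : Submodule ℂ ((Fin ℓ → ℂ) × (Fin ℓ → ℂ))) : Prop :=
  IsDissipativeRel T ∧ ∀ T' : Submodule ℂ ((Fin ℓ → ℂ) × (Fin ℓ → ℂ)),
    IsDissipativeRel T' → T ≤ T' → T' = T

lemma star_dot_self_re_nonneg {ℓ : ℕ} (v : Fin ℓ → ℂ) : 0 ≤ (star v ⬝ᵥ v).re := by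
  have : star v ⬝ᵥ v = ∑ i, (Complex.normSq (v i) : ℂ) := by
    simp [dotProduct, Complex.normSq_eq_conj_mul_self]
  rw [this]
  simp only [Complex.re_sum, Complex.ofReal_re]
  exact Finset.sum_nonneg fun i _ => Complex.normSq_nonneg _

lemma star_dot_self_re_eq_zero {ℓ : ℕ} (v : Fin ℓ → ℂ) (h : (star v ⬝ᵥ v).re = 0) : v = 0 := by
  rw [← dotProduct_star_self_eq_zero (v := v)]
  have him : (star v ⬝ᵥ v).im = 0 := by
    have : star v ⬝ᵥ v = ∑ i, (Complex.normSq (v i) : ℂ) := by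
      simp [dotProduct, Complex.normSq_eq_conj_mul_self]
    rw [this]
    simp [Complex.im_sum]
  exact Complex.ext h him

theorem ranRel_isMaxDissipative (ℓ : ℕ) (W₁ W₂ : Matrix (Fin ℓ) (Fin ℓ) ℂ)
    (hrank : (Matrix.fromCols W₁ W₂).rank = ℓ)
    (hpos : (W₁ * W₂ᴴ + W₂ * W₁ᴴ).PosSemidef) :
    IsMaxDissipativeRel (ranRel W₁ W₂) := by
  classical
  -- Dissipativity
  have hdiss : IsDissipativeRel (ranRel W₁ W₂) := by
    rintro p ⟨x, rfl⟩
    simp only [LinearMap.prod_apply, Function.prod_apply, mulVecLin_apply, LinearMap.neg_apply]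
    have hz : star (W₂ᴴ *ᵥ x) ⬝ᵥ (W₁ᴴ *ᵥ x) = star x ⬝ᵥ ((W₂ * W₁ᴴ) *ᵥ x) := by
      rw [star_mulVec, conjTranspose_conjTranspose, dotProduct_mulVec, vecMul_vecMul,
        ← dotProduct_mulVec]
    have hq := hpos.dotProduct_mulVec_nonneg x
    have hqre : 0 ≤ (star x ⬝ᵥ ((W₁ * W₂ᴴ + W₂ * W₁ᴴ) *ᵥ x)).re :=
      (Complex.le_def.mp hq).1
    have hsplit : star x ⬝ᵥ ((W₁ * W₂ᴴ + W₂ * W₁ᴴ) *ᵥ x)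
        = star x ⬝ᵥ ((W₁ * W₂ᴴ) *ᵥ x) + star x ⬝ᵥ ((W₂ * W₁ᴴ) *ᵥ x) := by
      rw [add_mulVec, dotProduct_add]
    have hconj : star x ⬝ᵥ ((W₁ * W₂ᴴ) *ᵥ x) = star (star x ⬝ᵥ ((W₂ * W₁ᴴ) *ᵥ x)) := by
      rw [star_dotProduct]
      congr 1
      rw [star_mulVec, conjTranspose_mul, conjTranspose_conjTranspose, ← dotProduct_mulVec]
    set z := star x ⬝ᵥ ((W₂ * W₁ᴴ) *ᵥ x) with hzdef
    have h2 : 0 ≤ (star z + z).re := by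
      rw [← hconj, ← hsplit]; exact hqre
    have hzre : 0 ≤ z.re := by
      have : (star z + z).re = 2 * z.re := by
        simp [Complex.add_re, Complex.star_def, Complex.conj_re]; ring
      linarith [this ▸ h2]
    have : star (W₂ᴴ *ᵥ x) ⬝ᵥ (-(W₁ᴴ *ᵥ x)) = -z := by
      rw [dotProduct_neg, hz]
    rw [this, Complex.neg_re]
    linarith
  refine ⟨hdiss, fun T' hT' hle => ?_⟩
  -- Injectivity of the defining map
  have hsurj : Function.Surjective (Matrix.fromCols W₁ W₂).mulVecLin := by
    rw [← LinearMap.range_eq_top]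
    apply Submodule.eq_top_of_finrank_eq
    rw [← Matrix.rank, hrank]
    simp
  have hinj : Function.Injective ((W₂ᴴ).mulVecLin.prod (-(W₁ᴴ).mulVecLin)) := by
    rw [← LinearMap.ker_eq_bot]
    rw [Submodule.eq_bot_iff]
    intro x hx
    simp only [LinearMap.mem_ker, LinearMap.prod_apply, Function.prod_apply, mulVecLin_apply,
      LinearMap.neg_apply, Prod.mk_eq_zero, neg_eq_zero] at hx
    obtain ⟨h2, h1⟩ := hx
    obtain ⟨y, hy⟩ := hsurj x
    have hy' : Matrix.fromCols W₁ W₂ *ᵥ y = x := hy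
    have hy2 : Matrix.fromCols W₁ W₂ *ᵥ Sum.elim (y ∘ Sum.inl) (y ∘ Sum.inr) = x := by
      rwa [Sum.elim_comp_inl_inr]
    rw [Matrix.fromCols_mulVec_sumElim] at hy2
    have hd : star x ⬝ᵥ x = 0 := by
      have e1 : star x ᵥ* W₁ = 0 := by
        have := congrArg star h1
        rwa [star_mulVec, conjTranspose_conjTranspose, star_zero] at this
      have e2 : star x ᵥ* W₂ = 0 := by
        have := congrArg star h2
        rwa [star_mulVec, conjTranspose_conjTranspose, star_zero] at this
      calc star x ⬝ᵥ x = star x ⬝ᵥ (W₁ *ᵥ (y ∘ Sum.inl) + W₂ *ᵥ (y ∘ Sum.inr)) := by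
            rw [hy2]
        _ = 0 := by
            rw [dotProduct_add, dotProduct_mulVec, dotProduct_mulVec, e1, e2,
              zero_dotProduct, zero_dotProduct, add_zero]
    exact dotProduct_star_self_eq_zero.mp hd
  have hfinT : Module.finrank ℂ (ranRel W₁ W₂) = ℓ := by
    rw [ranRel, LinearMap.finrank_range_of_inj hinj]
    simp
  -- Injectivity of (f, g) ↦ f - g on T'
  have hsubinj : Function.Injective
      (((LinearMap.fst ℂ (Fin ℓ → ℂ) (Fin ℓ → ℂ)) - (LinearMap.snd ℂ _ _)).comp T'.subtype) := by
    rw [← LinearMap.ker_eq_bot, Submodule.eq_bot_iff]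
    rintro ⟨p, hp⟩ hker
    simp only [LinearMap.mem_ker, LinearMap.comp_apply, Submodule.subtype_apply,
      LinearMap.sub_apply, LinearMap.fst_apply, LinearMap.snd_apply, sub_eq_zero] at hker
    have h1 := hT' p hp
    rw [← hker] at h1
    have h0 : p.1 = 0 :=
      star_dot_self_re_eq_zero p.1 (le_antisymm h1 (star_dot_self_re_nonneg p.1))
    have : p = 0 := Prod.ext h0 (hker ▸ h0)
    simp [this]
  have hfinT' : Module.finrank ℂ T' ≤ ℓ := by
    have := LinearMap.finrank_range_of_inj hsubinj
    have hle2 := Submodule.finrank_le (LinearMap.range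
      (((LinearMap.fst ℂ (Fin ℓ → ℂ) (Fin ℓ → ℂ)) - (LinearMap.snd ℂ _ _)).comp T'.subtype))
    rw [this] at hle2
    simpa using hle2
  have hfin : Module.finrank ℂ T' ≤ Module.finrank ℂ (ranRel W₁ W₂) := by
    rw [hfinT]; exact hfinT'
  exact (Submodule.eq_of_le_of_finrank_le hle hfin).symm
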